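/- Consider the idealized MASS stochastic search on a nonempty separable metric space E (equipped with its Borel σ-algebra) with target point z₀ ∈ E, defined on a probability space (Ω, ℱ, P). At each iteration I ∈ ℕ the procedure generates L ≥ 1 new candidate points Y_{I,1}, …, Y_{I,L}, where the family (Y_{I,j}) is i.i.d. across all pairs (I,j) with common law μ whose topological support is all of E. The selected points s_I : Ω → E are random variables satisfying: s_0 ∈ {Y_{0,1}, …, Y_{0,L}}, and for every I, s_{I+1}(ω) belongs to the candidate set C_{I+1}(ω) = {s_I(ω)} ∪ {Y_{I+1,1}(ω), …, Y_{I+1,L}(ω)}. Suppose there exists ε > 0 such that the selection rule satisfies: for every I and every ω, whenever min_{c ∈ C_{I+1}(ω)} d(c, z₀) ≤ ε, the selection s_{I+1}(ω) attains this minimum. Then almost surely d(s_I, z₀) → 0 as I → ∞. -/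

import Mathlib

open MeasureTheory ProbabilityTheory Filter Topology

/-- **Idealized MASS stochastic search converges almost surely.**
On a nonempty separable metric space `E` with its Borel σ-algebra, target `z₀ ∈ E`,
and probability space `(Ω, P)`: at each iteration the procedure generates `L ≥ 1`
i.i.d. candidates `Y I j` with common law `μ` of full topological support.  The
selected points `s I` satisfy `s 0 ∈ {Y 0 j}`, `s (I+1)` lies in the candidate set
`{s I} ∪ {Y (I+1) j}`, and whenever some candidate is within `ε` of `z₀` the
selection attains the minimal distance to `z₀` over the candidate set.  Then
almost surely `dist (s I) z₀ → 0`. -/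
theorem mass_stochastic_search_converges
    {E : Type*} [MetricSpace E] [Nonempty E] [TopologicalSpace.SeparableSpace E]
    [MeasurableSpace E] [BorelSpace E]
    {Ω : Type*} [MeasurableSpace Ω] (P : Measure Ω) [IsProbabilityMeasure P]
    (z₀ : E) (L : ℕ) (hL : 1 ≤ L)
    (Y : ℕ → Fin L → Ω → E) (μ : Measure E)
    (hYmeas : ∀ I j, Measurable (Y I j))
    (hiid : iIndepFun
      (fun p : ℕ × Fin L => Y p.1 p.2) P)
    (hlaw : ∀ I j, Measure.map (Y I j) P = μ)
    (hsupp : ∀ U : Set E, IsOpen U → U.Nonempty → 0 < μ U)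
    (s : ℕ → Ω → E)
    (hsmeas : ∀ I, Measurable (s I))
    (hs0 : ∀ ω, ∃ j, s 0 ω = Y 0 j ω)
    (hmem : ∀ I ω, s (I + 1) ω = s I ω ∨ ∃ j, s (I + 1) ω = Y (I + 1) j ω)
    (ε : ℝ) (hε : 0 < ε)
    (hsel : ∀ I ω,
      (dist (s I ω) z₀ ≤ ε ∨ ∃ j, dist (Y (I + 1) j ω) z₀ ≤ ε) →
      dist (s (I + 1) ω) z₀ ≤ dist (s I ω) z₀ ∧
        ∀ j, dist (s (I + 1) ω) z₀ ≤ dist (Y (I + 1) j ω) z₀) :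
    ∀ᵐ ω ∂P, Tendsto (fun I => dist (s I ω) z₀) atTop (𝓝 0) := by
  set j₀ : Fin L := ⟨0, hL⟩ with hj₀
  -- for each n, a.s. infinitely often Y (I+1) j₀ is within ε/(n+1) of z₀
  have key : ∀ n : ℕ, ∀ᵐ ω ∂P,
      ∃ᶠ I in atTop, dist (Y (I + 1) j₀ ω) z₀ < ε / (n + 1) := by
    intro n
    set δ : ℝ := ε / (n + 1) with hδdef
    have hδpos : 0 < δ := div_pos hε (by positivity)
    set B : Set E := Metric.ball z₀ δ with hB
    have hBmeas : MeasurableSet B := Metric.isOpen_ball.measurableSet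
    have hBpos : 0 < μ B :=
      hsupp B Metric.isOpen_ball ⟨z₀, Metric.mem_ball_self hδpos⟩
    set D : ℕ → Set Ω := fun I => Y (I + 1) j₀ ⁻¹' B with hD
    have hDmeas : ∀ I, MeasurableSet (D I) := fun I => (hYmeas _ _) hBmeas
    have hDmeasure : ∀ I, P (D I) = μ B := by
      intro I
      rw [hD]
      rw [← hlaw (I + 1) j₀, Measure.map_apply (hYmeas _ _) hBmeas]
    have hinj : Function.Injective (fun I : ℕ => ((I + 1, j₀) : ℕ × Fin L)) := by
      intro a b hab
      simpa using congrArg Prod.fst hab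
    have hindep : iIndepSet D P := by
      rw [iIndepSet_iff_meas_biInter hDmeas]
      intro S
      have h1 : (⋂ I ∈ S, D I) =
          ⋂ p ∈ S.image (fun I : ℕ => ((I + 1, j₀) : ℕ × Fin L)),
            (fun p : ℕ × Fin L => Y p.1 p.2) p ⁻¹' B := by
        rw [Finset.set_biInter_finset_image]
      rw [h1, hiid.measure_inter_preimage_eq_mul
        (S.image (fun I : ℕ => ((I + 1, j₀) : ℕ × Fin L)))
        (sets := fun _ => B) (fun _ _ => hBmeas),
        Finset.prod_image (fun a _ b _ h => hinj h)]
    have hsum : (∑' I, P (D I)) = (⊤ : ENNReal) := by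
      simp only [hDmeasure]
      exact ENNReal.tsum_const_eq_top_of_ne_zero hBpos.ne'
    have hlimsup := measure_limsup_eq_one hDmeas hindep hsum
    have hae : ∀ᵐ ω ∂P, ω ∈ limsup D atTop := by
      rw [ae_iff]
      have hms : MeasurableSet (limsup D atTop) :=
        MeasurableSet.measurableSet_limsup hDmeas
      have : {a | ¬ a ∈ limsup D atTop} = (limsup D atTop)ᶜ := rfl
      rw [this, measure_compl hms (measure_ne_top P _), hlimsup, measure_univ]
      simp
    filter_upwards [hae] with ω hω
    have := Filter.mem_limsup_iff_frequently_mem.mp hω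
    exact this.mono fun I hI => by simpa [hD, hB] using hI
  rw [← ae_all_iff] at key
  filter_upwards [key] with ω hω
  -- deterministic part
  rw [Metric.tendsto_atTop]
  intro η hη
  obtain ⟨n, hn⟩ := exists_nat_gt (ε / η)
  set δ : ℝ := ε / (n + 1) with hδdef
  have hδε : δ ≤ ε := by
    rw [hδdef, div_le_iff₀ (by positivity)]
    nlinarith
  have hδη : δ < η := by
    rw [hδdef, div_lt_iff₀ (by positivity)]
    have : ε / η < (n : ℝ) + 1 := hn.trans (by linarith)
    calc ε = (ε / η) * η := by field_simp
    _ < ((n : ℝ) + 1) * η := by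
        exact mul_lt_mul_of_pos_right this hη
    _ = η * ((n : ℝ) + 1) := by ring
  obtain ⟨I, hI, -⟩ := ((hω n).and_eventually (eventually_ge_atTop 0)).exists
  refine ⟨I + 1, fun M hM => ?_⟩
  have hbase : dist (s (I + 1) ω) z₀ < δ := by
    have h := hsel I ω (Or.inr ⟨j₀, hI.le.trans hδε⟩)
    exact lt_of_le_of_lt (h.2 j₀) hI
  have hstep : ∀ k, dist (s (I + 1 + k) ω) z₀ < δ := by
    intro k
    induction k with
    | zero => simpa using hbase
    | succ k ih =>
      have h := hsel (I + 1 + k) ω (Or.inl (ih.le.trans hδε))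
      have : I + 1 + (k + 1) = (I + 1 + k) + 1 := by ring
      rw [this]
      exact lt_of_le_of_lt h.1 ih
  obtain ⟨k, hk⟩ := Nat.exists_eq_add_of_le hM
  rw [hk]
  have : dist (s (I + 1 + k) ω) z₀ < δ := hstep k
  rw [Real.dist_eq, sub_zero, abs_of_nonneg dist_nonneg]
  exact this.trans hδη
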